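/- arXiv:math/0012135 — 2 statements merged into one kernel-verified Lean document; each statement's English description precedes it below -/
import Mathlib

section
/- Let K be a discrete valuation field with valuation v and residue characteristic p > 0, with e = v(p) < ∞. Let e' = pe/(p−1). If m > e' then every element of 1 + M^m is a p-th power in K*, provided K is henselian. Consequently the image of 1 + M^m in K*/(K*)^p is trivial for m > e'. -/
open IsLocalRing Polynomial Finset


lemma dvr_pth_power_aux (p : ℕ) (hp : p.Prime) (O : Type*) [CommRing O] [IsDomain O]
    [IsDiscreteValuationRing O] [HenselianLocalRing O]
    [CharP (IsLocalRing.ResidueField O) p]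
    (ϖ : O) (hϖ : Irreducible ϖ) (e m : ℕ) (c : Oˣ)
    (hc : (p : O) = ϖ ^ e * c)
    (hm : m * (p - 1) > p * e) (u : Oˣ) :
    ∃ y : O, y ^ p = 1 + ϖ ^ m * u := by
  have hp2 : 2 ≤ p := hp.two_le
  have hme : e < m := by
    by_contra h
    push_neg at h
    have : m * (p-1) ≤ e * (p-1) := Nat.mul_le_mul_right _ h
    have : e * (p-1) ≤ p * e := by
      calc e * (p-1) ≤ e * p := Nat.mul_le_mul_left _ (Nat.sub_le _ _)
        _ = p * e := Nat.mul_comm _ _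
    omega
  set k := m - e with hk
  have hkm : m = e + k := by omega
  have hk1 : 1 ≤ k := by omega
  have hkp : m < k * p := by
    have h1 : m * (p - 1) + m * 1 = m * p := by
      rw [← Nat.mul_add]; congr 1; omega
    have h2 : k * p + e * p = m * p := by
      rw [hk, Nat.sub_mul, Nat.sub_add_cancel (Nat.mul_le_mul_right p hme.le)]
    have h3 : p * e = e * p := Nat.mul_comm _ _
    omega
  -- the coefficients
  set a : ℕ → O := fun j => if j = p then ϖ ^ (k * p - m)
    else ((p.choose j / p : ℕ) : O) * c * ϖ ^ (k * (j - 1)) with ha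
  have key1 : ∀ j ∈ Icc 1 p, ϖ ^ m * a j = (p.choose j : O) * ϖ ^ (k * j) := by
    intro j hj
    rw [mem_Icc] at hj
    by_cases hjp : j = p
    · rw [hjp]
      simp only [ha, if_pos rfl, Nat.choose_self, Nat.cast_one, one_mul]
      rw [← pow_add]
      congr 1
      omega
    · have hdvd : p ∣ p.choose j := hp.dvd_choose_self (by omega) (by omega)
      obtain ⟨d, hd⟩ := hdvd
      simp only [ha, if_neg hjp]
      rw [hd]
      rw [Nat.mul_div_cancel_left _ hp.pos]
      push_cast
      rw [hc]
      have hexp : m + k * (j - 1) = e + k * j := by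
        have : k * j = k * (j - 1) + k := by
          have : j - 1 + 1 = j := by omega
          calc k * j = k * (j - 1 + 1) := by rw [this]
            _ = k * (j - 1) + k := by ring
        omega
      calc ϖ ^ m * (((d : O)) * ↑c * ϖ ^ (k * (j - 1)))
          = (d : O) * ↑c * ϖ ^ (m + k * (j-1)) := by ring
        _ = (d : O) * ↑c * ϖ ^ (e + k * j) := by rw [hexp]
        _ = ϖ ^ e * ↑c * (d:O) * ϖ ^ (k * j) := by ring
  have key2 : a 1 = c := by
    have h1p : (1 : ℕ) ≠ p := by omega
    simp only [ha, if_neg h1p]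
    rw [Nat.choose_one_right, Nat.div_self hp.pos]
    simp
  have hϖM : ϖ ∈ maximalIdeal O := by
    rw [hϖ.maximalIdeal_eq]
    exact Ideal.mem_span_singleton_self ϖ
  have key3 : ∀ j ∈ Icc 2 p, a j ∈ maximalIdeal O := by
    intro j hj
    rw [mem_Icc] at hj
    by_cases hjp : j = p
    · rw [hjp]
      simp only [ha, if_pos rfl]
      have : k * p - m = (k * p - m - 1) + 1 := by omega
      rw [this, pow_succ]
      exact Ideal.mul_mem_left _ _ hϖM
    · simp only [ha, if_neg hjp]
      have : k * (j - 1) = (k * (j-1) - 1) + 1 := by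
        have : 1 ≤ k * (j - 1) := by
          have : 1 ≤ j - 1 := by omega
          calc 1 = 1 * 1 := rfl
            _ ≤ k * (j - 1) := Nat.mul_le_mul hk1 this
        omega
      rw [this, pow_succ, ← mul_assoc]
      exact Ideal.mul_mem_left _ _ hϖM
  -- the polynomial
  set a₀ : O := ↑u⁻¹ * ↑c with ha₀
  have ha₀u : IsUnit a₀ := (u⁻¹.isUnit).mul c.isUnit
  set H : O[X] := X ^ p - C (↑u⁻¹ : O) * ∑ j ∈ Icc 1 p, C (a j) * X ^ (p - j) with hH
  have hHmonic : H.Monic := by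
    apply monic_X_pow_sub
    apply lt_of_le_of_lt (degree_mul_le _ _)
    have h1 : (C (↑u⁻¹ : O)).degree ≤ 0 := degree_C_le
    have h2 : (∑ j ∈ Icc 1 p, C (a j) * X ^ (p - j)).degree ≤ ((p - 1 : ℕ) : WithBot ℕ) := by
      apply (degree_sum_le _ _).trans
      apply Finset.sup_le
      intro j hj
      rw [mem_Icc] at hj
      apply (degree_mul_le _ _).trans
      calc (C (a j)).degree + (X ^ (p - j) : O[X]).degree
          ≤ 0 + ((p - j : ℕ) : WithBot ℕ) := add_le_add degree_C_le (degree_X_pow_le _)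
        _ ≤ ((p - 1 : ℕ) : WithBot ℕ) := by
            rw [zero_add]
            exact_mod_cast (by omega : p - j ≤ p - 1)
    calc (C (↑u⁻¹ : O)).degree + (∑ j ∈ Icc 1 p, C (a j) * X ^ (p - j)).degree
        ≤ 0 + ((p - 1 : ℕ) : WithBot ℕ) := add_le_add h1 h2
      _ < ((p : ℕ) : WithBot ℕ) := by
          rw [zero_add]
          exact_mod_cast (by omega : p - 1 < p)
  have hsplit : Icc 1 p = insert 1 (Icc 2 p) := by
    ext j; simp only [mem_Icc, mem_insert]; omega
  have h1notin : (1 : ℕ) ∉ Icc 2 p := by simp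
  have hevalH : ∀ t : O, H.eval t = t ^ p - ↑u⁻¹ * ∑ j ∈ Icc 1 p, a j * t ^ (p - j) := by
    intro t
    simp [hH, eval_finset_sum]
  -- eval at a₀ in maximal ideal
  have hpow1 : a₀ ^ p = a₀ * a₀ ^ (p - 1) := by
    conv_lhs => rw [show p = (p-1) + 1 by omega]
    rw [pow_succ]; ring
  have hS2 : ∑ j ∈ Icc 2 p, a j * a₀ ^ (p - j) ∈ maximalIdeal O :=
    Ideal.sum_mem _ fun j hj => Ideal.mul_mem_right _ _ (key3 j hj)
  have hevalM : H.eval a₀ ∈ maximalIdeal O := by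
    rw [hevalH, hsplit, Finset.sum_insert h1notin, key2]
    have : a₀ ^ p - ↑u⁻¹ * (↑c * a₀ ^ (p - 1) + ∑ j ∈ Icc 2 p, a j * a₀ ^ (p - j))
        = (-(↑u⁻¹ : O)) * ∑ j ∈ Icc 2 p, a j * a₀ ^ (p - j) := by
      rw [hpow1, ha₀]; ring
    rw [this]
    exact Ideal.mul_mem_left _ _ hS2
  -- derivative eval unit
  have hpM : (p : O) ∈ maximalIdeal O := by
    rw [← Ideal.Quotient.eq_zero_iff_mem, map_natCast]
    exact CharP.cast_eq_zero (ResidueField O) p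
  have hp1unit : IsUnit ((p - 1 : ℕ) : O) := by
    rw [show (IsUnit ((p - 1 : ℕ) : O)) ↔ ((p - 1 : ℕ) : O) ∉ maximalIdeal O by
      rw [mem_maximalIdeal, mem_nonunits_iff, not_not]]
    intro hmem
    rw [← Ideal.Quotient.eq_zero_iff_mem, map_natCast] at hmem
    have hmem' : ((p - 1 : ℕ) : ResidueField O) = 0 := hmem
    rw [Nat.cast_sub hp.one_le, CharP.cast_eq_zero, Nat.cast_one, zero_sub,
      neg_eq_zero] at hmem'
    exact one_ne_zero hmem'
  have hderiv : ∀ t : O, H.derivative.eval t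
      = (p : O) * t ^ (p - 1) - ↑u⁻¹ * ∑ j ∈ Icc 1 p, a j * (((p - j : ℕ) : O) * t ^ (p - j - 1)) := by
    intro t
    simp [hH, derivative_sum, derivative_C_mul, derivative_X_pow, eval_finset_sum, mul_assoc]
  have hpow2 : a₀ ^ (p - 1) = a₀ * a₀ ^ (p - 2) := by
    conv_lhs => rw [show p - 1 = (p-2) + 1 by omega]
    rw [pow_succ]; ring
  have hDunit : IsUnit (H.derivative.eval a₀) := by
    have hS2' : ∑ j ∈ Icc 2 p, a j * (((p - j : ℕ) : O) * a₀ ^ (p - j - 1)) ∈ maximalIdeal O :=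
      Ideal.sum_mem _ fun j hj => Ideal.mul_mem_right _ _ (key3 j hj)
    have hMcomb : H.derivative.eval a₀ + ((p - 1 : ℕ) : O) * a₀ ^ (p - 1) ∈ maximalIdeal O := by
      rw [hderiv, hsplit, Finset.sum_insert h1notin, key2]
      have : a₀ ^ p - 1 = a₀ ^ p - 1 := rfl
      have heq : (p : O) * a₀ ^ (p - 1)
            - ↑u⁻¹ * (↑c * (((p - 1 : ℕ) : O) * a₀ ^ (p - 1 - 1))
              + ∑ j ∈ Icc 2 p, a j * (((p - j : ℕ) : O) * a₀ ^ (p - j - 1)))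
            + ((p - 1 : ℕ) : O) * a₀ ^ (p - 1)
          = (p : O) * a₀ ^ (p - 1)
            + (-(↑u⁻¹ : O)) * ∑ j ∈ Icc 2 p, a j * (((p - j : ℕ) : O) * a₀ ^ (p - j - 1)) := by
        have h11 : p - 1 - 1 = p - 2 := by omega
        rw [h11, hpow2, ha₀]; ring
      rw [heq]
      exact Ideal.add_mem _ (Ideal.mul_mem_right _ _ hpM) (Ideal.mul_mem_left _ _ hS2')
    by_contra hnot
    have hD : H.derivative.eval a₀ ∈ maximalIdeal O := by
      rw [mem_maximalIdeal]; exact hnot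
    have : ((p - 1 : ℕ) : O) * a₀ ^ (p - 1) ∈ maximalIdeal O := by
      have := Ideal.sub_mem _ hMcomb hD
      simpa using this
    have hunit : IsUnit (((p - 1 : ℕ) : O) * a₀ ^ (p - 1)) := hp1unit.mul (ha₀u.pow _)
    rw [mem_maximalIdeal, mem_nonunits_iff] at this
    exact this hunit
  -- Hensel
  obtain ⟨t₀, ht₀root, ht₀near⟩ := HenselianLocalRing.is_henselian H hHmonic a₀ hevalM hDunit
  have ht₀unit : IsUnit t₀ := by
    by_contra hnot
    have ht₀M : t₀ ∈ maximalIdeal O := by rw [mem_maximalIdeal]; exact hnot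
    have : a₀ ∈ maximalIdeal O := by
      have := Ideal.sub_mem _ ht₀M ht₀near
      simpa using this
    rw [mem_maximalIdeal, mem_nonunits_iff] at this
    exact this ha₀u
  obtain ⟨t₁, ht₁⟩ := ht₀unit
  have hroot : ∑ j ∈ Icc 1 p, a j * t₀ ^ (p - j) = ↑u * t₀ ^ p := by
    have h0 : H.eval t₀ = 0 := ht₀root
    rw [hevalH] at h0
    have h1 : t₀ ^ p = ↑u⁻¹ * ∑ j ∈ Icc 1 p, a j * t₀ ^ (p - j) :=
      sub_eq_zero.mp h0
    calc ∑ j ∈ Icc 1 p, a j * t₀ ^ (p - j)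
        = ↑u * (↑u⁻¹ * ∑ j ∈ Icc 1 p, a j * t₀ ^ (p - j)) := by
          rw [← mul_assoc]
          simp
      _ = ↑u * t₀ ^ p := by rw [← h1]
  -- the p-th root
  refine ⟨1 + ϖ ^ k * ↑t₁⁻¹, ?_⟩
  have ht₀ne : t₀ ^ p ≠ 0 := pow_ne_zero _ (by rw [← ht₁]; exact t₁.ne_zero)
  apply mul_right_cancel₀ ht₀ne
  have hyt : (1 + ϖ ^ k * (↑t₁⁻¹ : O)) * t₀ = ϖ ^ k + t₀ := by
    rw [← ht₁]
    have : (↑t₁⁻¹ : O) * ↑t₁ = 1 := t₁.inv_mul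
    calc (1 + ϖ ^ k * (↑t₁⁻¹ : O)) * ↑t₁ = ↑t₁ + ϖ ^ k * ((↑t₁⁻¹ : O) * ↑t₁) := by ring
      _ = ϖ ^ k + ↑t₁ := by rw [this]; ring
  calc (1 + ϖ ^ k * (↑t₁⁻¹ : O)) ^ p * t₀ ^ p
      = ((1 + ϖ ^ k * (↑t₁⁻¹ : O)) * t₀) ^ p := by rw [mul_pow]
    _ = (ϖ ^ k + t₀) ^ p := by rw [hyt]
    _ = ∑ j ∈ range (p + 1), (ϖ ^ k) ^ j * t₀ ^ (p - j) * (p.choose j : O) := add_pow _ _ _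
    _ = t₀ ^ p + ∑ j ∈ Icc 1 p, (ϖ ^ k) ^ j * t₀ ^ (p - j) * (p.choose j : O) := by
        have hr : range (p + 1) = insert 0 (Icc 1 p) := by
          ext j; simp only [mem_range, mem_insert, mem_Icc]; omega
        rw [hr, Finset.sum_insert (by simp)]
        simp
    _ = t₀ ^ p + ϖ ^ m * (↑u * t₀ ^ p) := by
        congr 1
        rw [← hroot, Finset.mul_sum]
        apply Finset.sum_congr rfl
        intro j hj
        have hkey := key1 j hj
        rw [← pow_mul]
        calc ϖ ^ (k * j) * t₀ ^ (p - j) * (p.choose j : O)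
            = ((p.choose j : O) * ϖ ^ (k * j)) * t₀ ^ (p - j) := by ring
          _ = (ϖ ^ m * a j) * t₀ ^ (p - j) := by rw [hkey]
          _ = ϖ ^ m * (a j * t₀ ^ (p - j)) := by ring
    _ = (1 + ϖ ^ m * ↑u) * t₀ ^ p := by ring

/-- Let `K` be a henselian discrete valuation field of mixed
characteristic `(0, p)`, with valuation ring `O`, maximal ideal `M` and
`e = v(p)` (i.e. `p ∈ M^e \ M^{e+1}`).  If `m > e' = pe/(p-1)`, i.e.
`m(p-1) > pe`, then every element of `1 + M^m` is a `p`-th power in `K*`;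
consequently the image of `1 + M^m` in `K*/(K*)^p` is trivial. -/
theorem one_add_high_unit_is_pth_power
    (p : ℕ) (hp : p.Prime) (O : Type*) [CommRing O] [IsDomain O]
    [IsDiscreteValuationRing O] [HenselianLocalRing O]
    [CharZero (FractionRing O)] [CharP (IsLocalRing.ResidueField O) p]
    (e m : ℕ)
    (he : (p : O) ∈ (IsLocalRing.maximalIdeal O) ^ e ∧
          (p : O) ∉ (IsLocalRing.maximalIdeal O) ^ (e + 1))
    (hm : m * (p - 1) > p * e) :
    (∀ x ∈ (IsLocalRing.maximalIdeal O) ^ m,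
      ∃ y : FractionRing O,
        (1 : FractionRing O) + algebraMap O (FractionRing O) x = y ^ p) ∧
    (∀ u : (FractionRing O)ˣ,
      (∃ x ∈ (IsLocalRing.maximalIdeal O) ^ m,
        (u : FractionRing O) = 1 + algebraMap O (FractionRing O) x) →
      u ∈ (powMonoidHom p : (FractionRing O)ˣ →* (FractionRing O)ˣ).range) := by
  obtain ⟨ϖ, hϖ⟩ := IsDiscreteValuationRing.exists_irreducible O
  have hspan : ∀ n : ℕ, (maximalIdeal O) ^ n = Ideal.span {ϖ ^ n} := by
    intro n
    rw [hϖ.maximalIdeal_eq, Ideal.span_singleton_pow]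
  -- p = ϖ^e * c with c a unit
  obtain ⟨r, hr⟩ : ϖ ^ e ∣ (p : O) := by
    have := he.1
    rwa [hspan, Ideal.mem_span_singleton] at this
  have hrunit : IsUnit r := by
    by_contra hru
    apply he.2
    rw [hspan, Ideal.mem_span_singleton]
    have hrM : r ∈ maximalIdeal O := by rwa [mem_maximalIdeal, mem_nonunits_iff]
    rw [hϖ.maximalIdeal_eq, Ideal.mem_span_singleton] at hrM
    obtain ⟨s, hs⟩ := hrM
    exact ⟨s, by rw [hr, hs, pow_succ]; ring⟩
  obtain ⟨c, hcr⟩ := hrunit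
  have hc : (p : O) = ϖ ^ e * c := by rw [hr, hcr]
  have h1 : ∀ x ∈ (maximalIdeal O) ^ m,
      ∃ y : O, (1 : O) + x = y ^ p := by
    intro x hx
    by_cases hx0 : x = 0
    · exact ⟨1, by simp [hx0]⟩
    · obtain ⟨n, u, hxu⟩ := IsDiscreteValuationRing.eq_unit_mul_pow_irreducible hx0 hϖ
      have hmn : m ≤ n := by
        rw [hspan, Ideal.mem_span_singleton, hxu] at hx
        have hdvd : ϖ ^ m ∣ ϖ ^ n := Units.dvd_mul_left.mp hx
        exact (pow_dvd_pow_iff hϖ.ne_zero hϖ.not_isUnit).mp hdvd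
      have hm' : n * (p - 1) > p * e :=
        lt_of_lt_of_le hm (Nat.mul_le_mul_right _ hmn)
      obtain ⟨y, hy⟩ := dvr_pth_power_aux p hp O ϖ hϖ e n c hc hm' u
      exact ⟨y, by rw [hy, hxu]; ring⟩
  constructor
  · intro x hx
    obtain ⟨y, hy⟩ := h1 x hx
    refine ⟨algebraMap O (FractionRing O) y, ?_⟩
    rw [← map_pow, ← hy, map_add, map_one]
  · rintro u ⟨x, hx, hux⟩
    obtain ⟨y, hy⟩ := h1 x hx
    have hup : (u : FractionRing O) = (algebraMap O (FractionRing O) y) ^ p := by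
      rw [hux, ← map_pow, ← hy, map_add, map_one]
    have hyne : algebraMap O (FractionRing O) y ≠ 0 := by
      intro h0
      apply u.ne_zero
      rw [hup, h0, zero_pow hp.ne_zero]
    refine ⟨(Ne.isUnit hyne).unit, Units.ext ?_⟩
    simp [powMonoidHom, ← hup]
end

section
/- Consider a commutative diagram of abelian groups where: a short exact sequence 0 → S_K → H_K → C_K → 0 maps via (res, res, res) to an exact sequence 0 → S_L → H_L → C_L with a further map (cor, cor) to 0 → S_K → H_K; the left column S_K → S_L → S_K is exact; there is a map u : A → H_K with the middle column A → H_K → H_L exact at H_K; the composite H_K → H_L → H_K is multiplication by p (so in particular a complex if all groups are p-torsion); and the image of A → H_K lands in S_K. Then the induced map C_K → C_L is injective. -/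
/-- the diagram chase of Step III.  Given a commutative diagram of
abelian groups in which `0 → S_K → H_K → C_K → 0` is short exact, `0 → S_L → H_L → C_L`
is exact, the column `S_K → S_L → S_K` (restriction followed by corestriction) is exact,
`A → H_K → H_L` is exact at `H_K`, the composite `H_K → H_L → H_K` is multiplication by
`p` with `H_K` `p`-torsion, and the image of `u : A → H_K` lands in `S_K`, the induced
map `C_K → C_L` is injective. -/
theorem step_three_diagram_chase
    (p : ℕ)
    {SK HK CK SL HL CL A : Type*}
    [AddCommGroup SK] [AddCommGroup HK] [AddCommGroup CK]
    [AddCommGroup SL] [AddCommGroup HL] [AddCommGroup CL] [AddCommGroup A]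
    (iK : SK →+ HK) (pK : HK →+ CK) (iL : SL →+ HL) (pL : HL →+ CL)
    (resS : SK →+ SL) (resH : HK →+ HL) (resC : CK →+ CL)
    (corS : SL →+ SK) (corH : HL →+ HK) (u : A →+ HK)
    -- rows
    (hiK : Function.Injective iK) (hKexact : Function.Exact iK pK)
    (hpK : Function.Surjective pK)
    (hiL : Function.Injective iL) (hLexact : Function.Exact iL pL)
    -- commutativity
    (hc1 : ∀ s, resH (iK s) = iL (resS s))
    (hc2 : ∀ h, resC (pK h) = pL (resH h))
    (hc3 : ∀ s, corH (iL s) = iK (corS s))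
    -- left column exact
    (hS : Function.Exact resS corS)
    -- middle column exact at H_K
    (hmid : Function.Exact u resH)
    -- cor ∘ res = p, and H_K is p-torsion
    (hcr : ∀ h : HK, corH (resH h) = p • h)
    (htor : ∀ h : HK, p • h = 0)
    -- the image of u lies in the symbolic part
    (hu : ∀ a : A, ∃ s : SK, u a = iK s) :
    Function.Injective resC := by
  rw [injective_iff_map_eq_zero]
  intro c hc
  obtain ⟨h, rfl⟩ := hpK c
  have h1 : pL (resH h) = 0 := by rw [← hc2]; exact hc
  obtain ⟨s', hs'⟩ := (hLexact (resH h)).mp h1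
  have h2 : iK (corS s') = 0 := by
    rw [← hc3, hs', hcr, htor]
  have h3 : corS s' = 0 := hiK (by simpa using h2)
  obtain ⟨s, hs⟩ := (hS s').mp h3
  have h4 : resH (h - iK s) = 0 := by
    simp [map_sub, hc1, hs, hs']
  obtain ⟨a, ha⟩ := (hmid _).mp h4
  obtain ⟨t, ht⟩ := hu a
  have h5 : h = iK (t + s) := by
    rw [map_add, ← ht, ha]; abel
  rw [h5]
  exact (hKexact _).mpr ⟨t + s, rfl⟩
end
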